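/- In a flow network with vector-valued capacities c(e) ∈ (ℤ ∪ {∞})^n ordered lexicographically and vector-valued flows satisfying 0 ⪯ f(e) ⪯ c(e) and flow conservation at internal vertices, if a flow f admits no augmenting path in the residual graph, then f is a maximum flow (i.e., val(f) is lexicographically maximum among all feasible flows). -/

import Mathlib

/-- A feasible vector-valued flow in a vb-network: flows are lexicographically
non-negative, bounded by the (possibly infinite) capacities, and conserved at all
internal vertices. -/
def VbFeasible {V : Type*} [Fintype V] {n : ℕ} (s t : V)
    (c : V → V → WithTop (Lex (Fin n → ℤ))) (f : V → V → Fin n → ℤ) : Prop :=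
  (∀ u v : V, (0 : Lex (Fin n → ℤ)) ≤ toLex (f u v) ∧
      ((toLex (f u v) : Lex (Fin n → ℤ)) : WithTop (Lex (Fin n → ℤ))) ≤ c u v) ∧
  (∀ v : V, v ≠ s → v ≠ t → ∑ u, f u v = ∑ u, f v u)

/-- The value of a flow: the net flow out of the source. -/
def vbVal {V : Type*} [Fintype V] {n : ℕ} (s : V) (f : V → V → Fin n → ℤ) :
    Fin n → ℤ :=
  (∑ v, f s v) - ∑ v, f v s

/-- The residual graph: a forward edge where flow is strictly below capacity, or a
backward edge where the reverse flow is lexicographically positive. -/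
def VbResidual {V : Type*} {n : ℕ} (c : V → V → WithTop (Lex (Fin n → ℤ)))
    (f : V → V → Fin n → ℤ) (u v : V) : Prop :=
  ((toLex (f u v) : Lex (Fin n → ℤ)) : WithTop (Lex (Fin n → ℤ))) < c u v ∨
    (0 : Lex (Fin n → ℤ)) < toLex (f v u)

/-- Sums are monotone in the lexicographic order. -/
theorem vb_sum_le_sum {n : ℕ} {ι : Type*} (s : Finset ι) (g h : ι → Lex (Fin n → ℤ))
    (hle : ∀ x ∈ s, g x ≤ h x) : ∑ x ∈ s, g x ≤ ∑ x ∈ s, h x := by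
  classical
  induction s using Finset.induction with
  | empty => simp
  | insert _ _ hx ih =>
    rw [Finset.sum_insert hx, Finset.sum_insert hx]
    exact add_le_add (hle _ (Finset.mem_insert_self _ _))
      (ih fun x hxs => hle x (Finset.mem_insert_of_mem hxs))

/-- `toLex` commutes with finite sums. -/
theorem vb_toLex_sum {n : ℕ} {ι : Type*} (s : Finset ι) (g : ι → (Fin n → ℤ)) :
    toLex (∑ x ∈ s, g x) = ∑ x ∈ s, toLex (g x) :=
  map_sum (⟨toLex, fun _ _ => rfl⟩ : (Fin n → ℤ) ≃+ Lex (Fin n → ℤ)) g s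

/-- The value of a feasible flow equals the net flow across any cut containing the
source but not the sink. -/
theorem vb_val_eq_cut {V : Type*} [Fintype V] [DecidableEq V] {n : ℕ}
    (s t : V) (c : V → V → WithTop (Lex (Fin n → ℤ)))
    (S : Finset V) (hsS : s ∈ S) (htS : t ∉ S)
    (g : V → V → Fin n → ℤ) (hg : VbFeasible s t c g) :
    vbVal s g = ∑ v ∈ S, ∑ w ∈ Sᶜ, (g v w - g w v) := by
  have h1 : ∑ v ∈ S, ((∑ w, g v w) - ∑ w, g w v) = vbVal s g := by
    rw [Finset.sum_eq_single s]
    · rfl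
    · intro v hv hvs
      have hvt : v ≠ t := fun h => htS (h ▸ hv)
      rw [hg.2 v hvs hvt, sub_self]
    · intro h; exact absurd hsS h
  rw [← h1]
  have h2 : ∀ v, ((∑ w, g v w) - ∑ w, g w v)
      = (∑ w ∈ S, (g v w - g w v)) + ∑ w ∈ Sᶜ, (g v w - g w v) := by
    intro v
    rw [Finset.sum_sub_distrib, Finset.sum_sub_distrib,
      ← Finset.sum_add_sum_compl S (g v), ← Finset.sum_add_sum_compl S (fun w => g w v)]
    abel
  simp_rw [h2, Finset.sum_add_distrib]
  have hz : (∑ v ∈ S, ∑ w ∈ S, (g v w - g w v)) = 0 := by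
    simp_rw [Finset.sum_sub_distrib]
    rw [Finset.sum_comm, sub_self]
  rw [hz, zero_add]

/-- If a feasible vector-valued flow admits no augmenting path (no `s`–`t` path in the
residual graph), then it is a maximum flow: its value is lexicographically maximum
among all feasible flows. -/
theorem stmt_14 {V : Type*} [Fintype V] [DecidableEq V] {n : ℕ}
    (s t : V) (hst : s ≠ t)
    (c : V → V → WithTop (Lex (Fin n → ℤ)))
    (f : V → V → Fin n → ℤ) (hf : VbFeasible s t c f)
    (hbound : ∀ u v : V, ∑ i, |f u v i| ≤ 2 * (n : ℤ))
    (hnoaug : ¬ Relation.ReflTransGen (VbResidual c f) s t) :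
    ∀ f' : V → V → Fin n → ℤ, VbFeasible s t c f' →
      (∀ u v : V, ∑ i, |f' u v i| ≤ 2 * (n : ℤ)) →
      toLex (vbVal s f') ≤ toLex (vbVal s f) := by
  classical
  intro f' hf' _
  set S : Finset V := Finset.univ.filter
    (fun v => Relation.ReflTransGen (VbResidual c f) s v) with hS
  have hsS : s ∈ S := by
    simp only [hS, Finset.mem_filter, Finset.mem_univ, true_and]
    exact Relation.ReflTransGen.refl
  have htS : t ∉ S := by simp [hS]; exact hnoaug
  have hcut : ∀ v ∈ S, ∀ w ∈ Sᶜ, ¬ VbResidual c f v w := by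
    intro v hv w hw hres
    simp only [hS, Finset.mem_compl, Finset.mem_filter, Finset.mem_univ, true_and] at hv hw
    exact hw (hv.tail hres)
  rw [vb_val_eq_cut s t c S hsS htS f' hf', vb_val_eq_cut s t c S hsS htS f hf,
    vb_toLex_sum, vb_toLex_sum]
  refine vb_sum_le_sum _ _ _ fun v hv => ?_
  rw [vb_toLex_sum, vb_toLex_sum]
  refine vb_sum_le_sum _ _ _ fun w hw => ?_
  have hres := hcut v hv w hw
  rw [VbResidual, not_or] at hres
  -- forward edge saturated: c v w = f v w
  have hcap : ((toLex (f v w) : Lex (Fin n → ℤ)) : WithTop (Lex (Fin n → ℤ))) = c v w := by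
    by_contra hne
    exact hres.1 ((hf.1 v w).2.lt_of_ne hne)
  have h1 : toLex (f' v w) ≤ toLex (f v w) := by
    have h := (hf'.1 v w).2
    rw [← hcap, WithTop.coe_le_coe] at h
    exact h
  -- backward edge empty: f w v = 0
  have h2 : toLex (f w v) ≤ toLex (f' w v) := by
    have hz : (0 : Lex (Fin n → ℤ)) = toLex (f w v) := by
      by_contra hne
      exact hres.2 ((hf.1 w v).1.lt_of_ne hne)
    exact hz ▸ (hf'.1 w v).1
  have : toLex (f' v w) - toLex (f' w v) ≤ toLex (f v w) - toLex (f w v) :=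
    sub_le_sub h1 h2
  exact this
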